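/- Let k > 0 and β > −β̄(k). Then there exists ν > 0 such that for every u ∈ C²([0,1]) with u(0) = u(1) = 0, one has ∫₀¹ u''(x)² dx + β·∫₀¹ u'(x)² dx + k·∫₀¹ u(x)² dx ≥ ν·∫₀¹ u''(x)² dx. -/

import Mathlib

set_option linter.unusedSectionVars false
open Real Set MeasureTheory intervalIntegral Filter Topology

noncomputable def ct : ℝ → ℝ := fun x => π * Real.cos (π*x) / Real.sin (π*x)

lemma tendsto_sin_div : Tendsto (fun t : ℝ => Real.sin t / t) (𝓝[≠] 0) (𝓝 1) := by
  have h := hasDerivAt_iff_tendsto_slope.mp (Real.hasDerivAt_sin 0)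
  simp only [Real.cos_zero] at h
  refine h.congr (fun t => ?_)
  simp [slope_fun_def, Real.sin_zero, div_eq_inv_mul]

lemma tendsto_mul_ct_zero : Tendsto (fun y : ℝ => y * ct y) (𝓝[≠] 0) (𝓝 1) := by
  have hπy : Tendsto (fun y : ℝ => π*y) (𝓝[≠] 0) (𝓝[≠] 0) := by
    apply tendsto_nhdsWithin_of_tendsto_nhds_of_eventually_within
    · have : Tendsto (fun y : ℝ => π*y) (𝓝 0) (𝓝 (π*0)) :=
        (continuous_const.mul continuous_id).tendsto 0
      simpa using this.mono_left nhdsWithin_le_nhds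
    · filter_upwards [self_mem_nhdsWithin] with y hy
      exact mul_ne_zero Real.pi_ne_zero hy
  have hsin : Tendsto (fun y : ℝ => Real.sin (π*y)/(π*y)) (𝓝[≠] 0) (𝓝 1) :=
    tendsto_sin_div.comp hπy
  have hcos : Tendsto (fun y : ℝ => Real.cos (π*y)) (𝓝[≠] 0) (𝓝 1) := by
    have : Tendsto (fun y : ℝ => Real.cos (π*y)) (𝓝 0) (𝓝 (Real.cos (π*0))) :=
      (Real.continuous_cos.comp (continuous_const.mul continuous_id)).tendsto 0
    simpa using this.mono_left nhdsWithin_le_nhds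
  have key : Tendsto (fun y : ℝ => Real.cos (π*y) / (Real.sin (π*y)/(π*y)))
      (𝓝[≠] 0) (𝓝 1) := by
    have := hcos.div hsin one_ne_zero
    rw [div_one] at this
    exact this
  refine key.congr (fun y => ?_)
  rw [div_div_eq_mul_div, ct]
  ring

lemma tendsto_mul_ct_one : Tendsto (fun y : ℝ => (y-1) * ct y) (𝓝[≠] 1) (𝓝 1) := by
  have hsub : Tendsto (fun y : ℝ => y - 1) (𝓝[≠] 1) (𝓝[≠] 0) := by
    apply tendsto_nhdsWithin_of_tendsto_nhds_of_eventually_within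
    · have : Tendsto (fun y : ℝ => y - 1) (𝓝 1) (𝓝 (1-1)) :=
        (continuous_id.sub continuous_const).tendsto 1
      simpa using this.mono_left nhdsWithin_le_nhds
    · filter_upwards [self_mem_nhdsWithin] with y hy
      exact sub_ne_zero.mpr hy
  have key := tendsto_mul_ct_zero.comp hsub
  refine key.congr (fun y => ?_)
  show (y-1) * ct (y-1) = (y-1) * ct y
  rw [ct, ct, show π*y = π*(y-1)+π by ring, Real.cos_add_pi, Real.sin_add_pi,
    mul_neg, neg_div_neg_eq]

section
variable (u : ℝ → ℝ)

noncomputable def f1 (u : ℝ → ℝ) : ℝ → ℝ := derivWithin u (Icc 0 1)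
noncomputable def f2 (u : ℝ → ℝ) : ℝ → ℝ := derivWithin (f1 u) (Icc 0 1)

lemma udo : UniqueDiffOn ℝ (Icc (0:ℝ) 1) := uniqueDiffOn_Icc (by norm_num)

variable (hu : ContDiffOn ℝ 2 u (Icc 0 1))

lemma f1_eq (x : ℝ) (hx : x ∈ Icc (0:ℝ) 1) :
    iteratedDerivWithin 1 u (Icc 0 1) x = f1 u x :=
  by rw [iteratedDerivWithin_one]; rfl

lemma f2_eq (x : ℝ) (hx : x ∈ Icc (0:ℝ) 1) :
    iteratedDerivWithin 2 u (Icc 0 1) x = f2 u x := by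
  rw [show (2:ℕ) = 1 + 1 from rfl, iteratedDerivWithin_succ]
  apply derivWithin_congr
  · intro y hy; exact f1_eq u y hy
  · exact f1_eq u x hx

include hu

lemma cont_u : ContinuousOn u (Icc 0 1) := hu.continuousOn

lemma cd_f1 : ContDiffOn ℝ 1 (f1 u) (Icc 0 1) := by
  apply hu.derivWithin udo
  norm_num

lemma cont_f1 : ContinuousOn (f1 u) (Icc 0 1) := (cd_f1 u hu).continuousOn

lemma cont_f2 : ContinuousOn (f2 u) (Icc 0 1) :=
  (cd_f1 u hu).continuousOn_derivWithin udo (le_refl 1)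

lemma hderiv_u (x : ℝ) (hx : x ∈ Ioo (0:ℝ) 1) : HasDerivAt u (f1 u x) x := by
  have h1 : DifferentiableOn ℝ u (Icc 0 1) := hu.differentiableOn (by norm_num)
  have := (h1 x (Ioo_subset_Icc_self hx)).hasDerivWithinAt
  exact this.hasDerivAt (Icc_mem_nhds hx.1 hx.2)

lemma hderiv_f1 (x : ℝ) (hx : x ∈ Ioo (0:ℝ) 1) : HasDerivAt (f1 u) (f2 u x) x := by
  have h1 : DifferentiableOn ℝ (f1 u) (Icc 0 1) := (cd_f1 u hu).differentiableOn (by norm_num)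
  have := (h1 x (Ioo_subset_Icc_self hx)).hasDerivWithinAt
  exact this.hasDerivAt (Icc_mem_nhds hx.1 hx.2)

end

section
variable (u : ℝ → ℝ) (hu : ContDiffOn ℝ 2 u (Icc 0 1)) (h0 : u 0 = 0) (h1 : u 1 = 0)

include hu

lemma ii_of_contOn {g : ℝ → ℝ} (hg : ContinuousOn g (Icc 0 1)) :
    IntervalIntegrable g volume 0 1 := by
  apply ContinuousOn.intervalIntegrable
  rwa [uIcc_of_le (by norm_num : (0:ℝ) ≤ 1)]

include h0 h1 in
lemma IBP : ∫ x in (0:ℝ)..1, u x * f2 u x = -∫ x in (0:ℝ)..1, (f1 u x)^2 := by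
  have key : ∫ x in (0:ℝ)..1, ((f1 u x)^2 + u x * f2 u x) =
      u 1 * f1 u 1 - u 0 * f1 u 0 := by
    apply intervalIntegral.integral_eq_sub_of_hasDerivAt_of_le
      (f := fun x => u x * f1 u x) (f' := fun x => (f1 u x)^2 + u x * f2 u x) (by norm_num)
    · exact ((cont_u u hu).mul (cont_f1 u hu))
    · intro x hx
      have := (hderiv_u u hu x hx).mul (hderiv_f1 u hu x hx)
      convert this using 1
      · rfl
      · rfl
      ring
    · apply ii_of_contOn u hu
      have := (((cont_f1 u hu).mul (cont_f1 u hu)).add ((cont_u u hu).mul (cont_f2 u hu)))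
      exact this.congr (by intro x hx; simp [sq])

  rw [h0, h1] at key
  simp only [zero_mul, sub_zero] at key
  have hsplit : ∫ x in (0:ℝ)..1, ((f1 u x)^2 + u x * f2 u x) =
      (∫ x in (0:ℝ)..1, (f1 u x)^2) + ∫ x in (0:ℝ)..1, u x * f2 u x := by
    apply intervalIntegral.integral_add
    · exact ii_of_contOn u hu (((cont_f1 u hu).mul (cont_f1 u hu)).congr (by intro x hx; simp [sq]))
    · exact ii_of_contOn u hu ((cont_u u hu).mul (cont_f2 u hu))
  rw [hsplit] at key
  linarith

end

section Poincare
variable (u : ℝ → ℝ) (hu : ContDiffOn ℝ 2 u (Icc 0 1)) (h0 : u 0 = 0) (h1 : u 1 = 0)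

noncomputable def hh (u : ℝ → ℝ) : ℝ → ℝ :=
  fun x => if x ∈ Ioo (0:ℝ) 1 then f1 u x - u x * ct x else 0

lemma sin_pos_of_Ioo {x : ℝ} (hx : x ∈ Ioo (0:ℝ) 1) : 0 < Real.sin (π*x) := by
  apply Real.sin_pos_of_pos_of_lt_pi
  · exact mul_pos Real.pi_pos hx.1
  · nlinarith [hx.2, Real.pi_pos]

lemma ct_contAt {x : ℝ} (hx : x ∈ Ioo (0:ℝ) 1) : ContinuousAt ct x := by
  apply ContinuousAt.div
  · exact (Real.continuous_cos.comp (continuous_const.mul continuous_id)).continuousAt.const_mul _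
  · exact (Real.continuous_sin.comp (continuous_const.mul continuous_id)).continuousAt
  · exact (sin_pos_of_Ioo hx).ne'

include hu h0 h1 in
lemma cont_hh : ContinuousOn (hh u) (Icc 0 1) := by
  have hd : DifferentiableOn ℝ u (Icc 0 1) := hu.differentiableOn (by norm_num)
  intro x hx
  rcases eq_or_ne x 0 with rfl | hx0
  · -- continuity at 0
    apply continuousWithinAt_diff_self.mp
    rw [ContinuousWithinAt, show hh u 0 = 0 by simp [hh]]
    have hmono : 𝓝[Icc (0:ℝ) 1 \ {0}] 0 ≤ 𝓝[{(0:ℝ)}ᶜ] 0 :=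
      nhdsWithin_mono _ (fun y hy => hy.2)
    have hf1 : Tendsto (f1 u) (𝓝[Icc (0:ℝ) 1 \ {0}] 0) (𝓝 (f1 u 0)) :=
      ((cont_f1 u hu) 0 (by norm_num)).mono_left (nhdsWithin_mono _ diff_subset)
    have hslope : Tendsto (fun y => u y / y) (𝓝[Icc (0:ℝ) 1 \ {0}] 0) (𝓝 (f1 u 0)) := by
      have h2 := hasDerivWithinAt_iff_tendsto_slope.mp (hd 0 (by norm_num)).hasDerivWithinAt
      refine (h2.congr (fun y => ?_))
      simp [slope_fun_def, h0, div_eq_inv_mul]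
    have hyc : Tendsto (fun y => y * ct y) (𝓝[Icc (0:ℝ) 1 \ {0}] 0) (𝓝 1) :=
      tendsto_mul_ct_zero.mono_left hmono
    have T := hf1.sub (hslope.mul hyc)
    rw [show f1 u 0 - f1 u 0 * 1 = 0 by ring] at T
    apply T.congr'
    filter_upwards [self_mem_nhdsWithin,
      (eventually_lt_nhds (show (0:ℝ) < 1 by norm_num)).filter_mono nhdsWithin_le_nhds]
      with y hy hy1
    have hy0 : 0 < y := lt_of_le_of_ne hy.1.1 (Ne.symm hy.2)
    rw [show u y / y * (y * ct y) = u y * ct y by field_simp]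
    simp only [hh, mem_Ioo]
    rw [if_pos ⟨hy0, hy1⟩]
  rcases eq_or_ne x 1 with rfl | hx1
  · -- continuity at 1
    apply continuousWithinAt_diff_self.mp
    rw [ContinuousWithinAt, show hh u 1 = 0 by simp [hh]]
    have hmono : 𝓝[Icc (0:ℝ) 1 \ {1}] 1 ≤ 𝓝[{(1:ℝ)}ᶜ] 1 :=
      nhdsWithin_mono _ (fun y hy => hy.2)
    have hf1 : Tendsto (f1 u) (𝓝[Icc (0:ℝ) 1 \ {1}] 1) (𝓝 (f1 u 1)) :=
      ((cont_f1 u hu) 1 (by norm_num)).mono_left (nhdsWithin_mono _ diff_subset)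
    have hslope : Tendsto (fun y => u y / (y-1)) (𝓝[Icc (0:ℝ) 1 \ {1}] 1) (𝓝 (f1 u 1)) := by
      have h2 := hasDerivWithinAt_iff_tendsto_slope.mp (hd 1 (by norm_num)).hasDerivWithinAt
      refine (h2.congr (fun y => ?_))
      simp [slope_fun_def, h1, div_eq_inv_mul]
    have hyc : Tendsto (fun y => (y-1) * ct y) (𝓝[Icc (0:ℝ) 1 \ {1}] 1) (𝓝 1) :=
      tendsto_mul_ct_one.mono_left hmono
    have T := hf1.sub (hslope.mul hyc)
    rw [show f1 u 1 - f1 u 1 * 1 = 0 by ring] at T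
    apply T.congr'
    filter_upwards [self_mem_nhdsWithin,
      (eventually_gt_nhds (show (0:ℝ) < 1 by norm_num)).filter_mono nhdsWithin_le_nhds]
      with y hy hy0
    have hy1 : y < 1 := lt_of_le_of_ne hy.1.2 hy.2
    rw [show u y / (y-1) * ((y-1) * ct y) = u y * ct y by
      have : y - 1 ≠ 0 := sub_ne_zero.mpr hy.2
      field_simp]
    simp only [hh, mem_Ioo]
    rw [if_pos ⟨hy0, hy1⟩]
  · -- interior point
    have hxI : x ∈ Ioo (0:ℝ) 1 :=
      ⟨lt_of_le_of_ne hx.1 (Ne.symm hx0), lt_of_le_of_ne hx.2 hx1⟩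
    have hF : ContinuousWithinAt (fun y => f1 u y - u y * ct y) (Icc 0 1) x :=
      ((cont_f1 u hu) x hx).sub (((cont_u u hu) x hx).mul (ct_contAt hxI).continuousWithinAt)
    apply hF.congr_of_eventuallyEq
    · filter_upwards [nhdsWithin_le_nhds (isOpen_Ioo.mem_nhds hxI)] with y hy
      simp only [hh, if_pos hy]
    · simp only [hh, if_pos hxI]

noncomputable def gg (u : ℝ → ℝ) : ℝ → ℝ :=
  fun x => if x ∈ Ioo (0:ℝ) 1 then (u x)^2 * ct x else 0

include hu h0 h1 in
lemma cont_gg : ContinuousOn (gg u) (Icc 0 1) := by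
  have hF : ContinuousOn (fun y => u y * (f1 u y - hh u y)) (Icc 0 1) :=
    (cont_u u hu).mul ((cont_f1 u hu).sub (cont_hh u hu h0 h1))
  apply hF.congr
  intro y hy
  rcases eq_or_ne y 0 with rfl | hy0
  · simp [gg, hh, h0]
  rcases eq_or_ne y 1 with rfl | hy1
  · simp [gg, hh, h1]
  have hyI : y ∈ Ioo (0:ℝ) 1 :=
    ⟨lt_of_le_of_ne hy.1 (Ne.symm hy0), lt_of_le_of_ne hy.2 hy1⟩
  simp only [gg, hh, if_pos hyI]
  ring

lemma hasDerivAt_ct {x : ℝ} (hx : x ∈ Ioo (0:ℝ) 1) :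
    HasDerivAt ct (-(π^2)/(Real.sin (π*x))^2) x := by
  have hs := (sin_pos_of_Ioo hx).ne'
  have hin : HasDerivAt (fun y : ℝ => π * y) π x := by
    simpa using (hasDerivAt_id x).const_mul π
  have hcos : HasDerivAt (fun y : ℝ => π * Real.cos (π*y)) (π * (-Real.sin (π*x) * π)) x :=
    (((Real.hasDerivAt_cos (π*x)).comp x hin)).const_mul π
  have hsin : HasDerivAt (fun y : ℝ => Real.sin (π*y)) (Real.cos (π*x) * π) x :=
    (Real.hasDerivAt_sin (π*x)).comp x hin
  have := hcos.div hsin hs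
  convert this using 1
  · rfl
  · rfl
  · rfl
  have h2 : Real.cos (π*x)^2 = 1 - Real.sin (π*x)^2 := Real.cos_sq' _
  field_simp
  linear_combination h2

include hu in
lemma hasDerivAt_gg {x : ℝ} (hx : x ∈ Ioo (0:ℝ) 1) :
    HasDerivAt (gg u) ((f1 u x)^2 - π^2*(u x)^2 - (hh u x)^2) x := by
  have hs := (sin_pos_of_Ioo hx).ne'
  have hu2 : HasDerivAt (fun y => (u y)^2) (2 * u x * f1 u x) x := by
    have := ((hderiv_u u hu x hx).pow 2)
    simpa [mul_comm, Pi.pow_def] using this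
  have hD : HasDerivAt (fun y => (u y)^2 * ct y)
      (2 * u x * f1 u x * ct x + (u x)^2 * (-(π^2)/(Real.sin (π*x))^2)) x :=
    hu2.mul (hasDerivAt_ct hx)
  have heq : (f1 u x)^2 - π^2*(u x)^2 - (hh u x)^2
      = 2 * u x * f1 u x * ct x + (u x)^2 * (-(π^2)/(Real.sin (π*x))^2) := by
    simp only [hh, if_pos hx, ct]
    have h2 : Real.cos (π*x)^2 = 1 - Real.sin (π*x)^2 := Real.cos_sq' _
    field_simp
    linear_combination (-(π^2) * u x^2) * h2
  rw [heq]
  apply hD.congr_of_eventuallyEq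
  filter_upwards [isOpen_Ioo.mem_nhds hx] with y hy
  simp only [gg, if_pos hy]

include hu h0 h1 in
lemma poincare : π^2 * ∫ x in (0:ℝ)..1, (u x)^2 ≤ ∫ x in (0:ℝ)..1, (f1 u x)^2 := by
  set G : ℝ → ℝ := fun x => (f1 u x)^2 - π^2*(u x)^2 - (hh u x)^2 with hG
  have hGc : ContinuousOn G (Icc 0 1) :=
    (((cont_f1 u hu).pow 2).sub (continuousOn_const.mul ((cont_u u hu).pow 2))).sub
      ((cont_hh u hu h0 h1).pow 2)
  have key : ∫ x in (0:ℝ)..1, G x = gg u 1 - gg u 0 := by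
    apply integral_eq_sub_of_hasDeriv_right_of_le (by norm_num) (cont_gg u hu h0 h1)
    · intro x hx
      exact (hasDerivAt_gg u hu hx).hasDerivWithinAt
    · exact ii_of_contOn u hu hGc
  have hg10 : gg u 1 - gg u 0 = 0 := by simp [gg]
  have i1 : IntervalIntegrable (fun x => (f1 u x)^2) volume 0 1 :=
    ii_of_contOn u hu ((cont_f1 u hu).pow 2)
  have i2 : IntervalIntegrable (fun x => π^2*(u x)^2) volume 0 1 :=
    ii_of_contOn u hu (continuousOn_const.mul ((cont_u u hu).pow 2))
  have i3 : IntervalIntegrable (fun x => (hh u x)^2) volume 0 1 :=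
    ii_of_contOn u hu ((cont_hh u hu h0 h1).pow 2)
  have hsplit : ∫ x in (0:ℝ)..1, G x =
      (∫ x in (0:ℝ)..1, (f1 u x)^2) - (∫ x in (0:ℝ)..1, π^2*(u x)^2)
        - ∫ x in (0:ℝ)..1, (hh u x)^2 := by
    rw [hG]
    rw [intervalIntegral.integral_sub (i1.sub i2) i3, intervalIntegral.integral_sub i1 i2]
  have hnn : 0 ≤ ∫ x in (0:ℝ)..1, (hh u x)^2 := by
    apply intervalIntegral.integral_nonneg (by norm_num)
    intro x _; positivity
  have hmul : ∫ x in (0:ℝ)..1, π^2*(u x)^2 = π^2 * ∫ x in (0:ℝ)..1, (u x)^2 :=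
    intervalIntegral.integral_const_mul _ _
  rw [key, hg10] at hsplit
  rw [← hmul]
  linarith

end Poincare

section Ineqs
variable (u : ℝ → ℝ) (hu : ContDiffOn ℝ 2 u (Icc 0 1)) (h0 : u 0 = 0) (h1 : u 1 = 0)

include hu h0 h1 in
lemma S1 : 2*π^2 * (∫ x in (0:ℝ)..1, (f1 u x)^2) ≤
    (∫ x in (0:ℝ)..1, (f2 u x)^2) + π^4 * (∫ x in (0:ℝ)..1, (u x)^2) := by
  have i1 : IntervalIntegrable (fun x => (f2 u x)^2) volume 0 1 :=
    ii_of_contOn u hu ((cont_f2 u hu).pow 2)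
  have i2 : IntervalIntegrable (fun x => 2*π^2*(u x * f2 u x)) volume 0 1 :=
    ii_of_contOn u hu (continuousOn_const.mul ((cont_u u hu).mul (cont_f2 u hu)))
  have i3 : IntervalIntegrable (fun x => π^4*(u x)^2) volume 0 1 :=
    ii_of_contOn u hu (continuousOn_const.mul ((cont_u u hu).pow 2))
  have h : (0:ℝ) ≤ ∫ x in (0:ℝ)..1, (f2 u x + π^2 * u x)^2 := by
    apply intervalIntegral.integral_nonneg (by norm_num)
    intro x _; positivity
  have hexp : ∫ x in (0:ℝ)..1, (f2 u x + π^2 * u x)^2 =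
      (∫ x in (0:ℝ)..1, (f2 u x)^2) + (∫ x in (0:ℝ)..1, 2*π^2*(u x * f2 u x))
        + ∫ x in (0:ℝ)..1, π^4*(u x)^2 := by
    rw [← intervalIntegral.integral_add i1 i2, ← intervalIntegral.integral_add (i1.add i2) i3]
    apply intervalIntegral.integral_congr
    intro x _; dsimp; ring
  have h2 : ∫ x in (0:ℝ)..1, 2*π^2*(u x * f2 u x) = 2*π^2 * ∫ x in (0:ℝ)..1, u x * f2 u x :=
    intervalIntegral.integral_const_mul _ _
  have h3 : ∫ x in (0:ℝ)..1, π^4*(u x)^2 = π^4 * ∫ x in (0:ℝ)..1, (u x)^2 :=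
    intervalIntegral.integral_const_mul _ _
  have hibp := IBP u hu h0 h1
  rw [h2, h3, hibp] at hexp
  nlinarith [hexp, h]

include hu h0 h1 in
lemma amgm (t : ℝ) (ht : 0 < t) :
    ∫ x in (0:ℝ)..1, (f1 u x)^2 ≤
      t * (∫ x in (0:ℝ)..1, (f2 u x)^2) + (1/(4*t)) * (∫ x in (0:ℝ)..1, (u x)^2) := by
  have i1 : IntervalIntegrable (fun x => -(u x * f2 u x)) volume 0 1 :=
    ii_of_contOn u hu (((cont_u u hu).mul (cont_f2 u hu)).neg)
  have i2 : IntervalIntegrable (fun x => t*(f2 u x)^2 + (1/(4*t))*(u x)^2) volume 0 1 :=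
    ii_of_contOn u hu ((continuousOn_const.mul ((cont_f2 u hu).pow 2)).add
      (continuousOn_const.mul ((cont_u u hu).pow 2)))
  have hpt : ∀ x ∈ Icc (0:ℝ) 1, -(u x * f2 u x) ≤ t*(f2 u x)^2 + (1/(4*t))*(u x)^2 := by
    intro x _
    have key : 0 ≤ (t*(f2 u x)^2 + (1/(4*t))*(u x)^2 + u x * f2 u x) * (4*t) := by
      have : (t*(f2 u x)^2 + (1/(4*t))*(u x)^2 + u x * f2 u x) * (4*t)
          = (2*t*f2 u x + u x)^2 := by field_simp; ring
      rw [this]; positivity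
    nlinarith [key, ht]
  have hmono := intervalIntegral.integral_mono_on (by norm_num) i1 i2 hpt
  have hneg : ∫ x in (0:ℝ)..1, -(u x * f2 u x) = ∫ x in (0:ℝ)..1, (f1 u x)^2 := by
    rw [intervalIntegral.integral_neg, IBP u hu h0 h1, neg_neg]
  have hsplit : ∫ x in (0:ℝ)..1, (t*(f2 u x)^2 + (1/(4*t))*(u x)^2) =
      t * (∫ x in (0:ℝ)..1, (f2 u x)^2) + (1/(4*t)) * (∫ x in (0:ℝ)..1, (u x)^2) := by
    rw [intervalIntegral.integral_add
      (ii_of_contOn u hu (g := fun x => t*(f2 u x)^2) (continuousOn_const.mul ((cont_f2 u hu).pow 2)))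
      (ii_of_contOn u hu (g := fun x => (1/(4*t))*(u x)^2) (continuousOn_const.mul ((cont_u u hu).pow 2))),
      intervalIntegral.integral_const_mul, intervalIntegral.integral_const_mul]
  rw [hneg, hsplit] at hmono
  exact hmono

end Ineqs

/-- `β̄(k) = π² + k/π²` for `0 < k ≤ π⁴` and `β̄(k) = 2√k` for `k > π⁴`. -/
noncomputable def betaBar (k : ℝ) : ℝ :=
  if k ≤ π^4 then π^2 + k/π^2 else 2 * Real.sqrt k

/-- If `β > -β̄(k)` there is `ν > 0` such that for all `u ∈ C²([0,1])` with
`u(0) = u(1) = 0`: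
`∫ u''² + β ∫ u'² + k ∫ u² ≥ ν ∫ u''²`. -/
theorem stmt9 (k β : ℝ) (hk : 0 < k) (hβ : -betaBar k < β) :
    ∃ ν : ℝ, 0 < ν ∧
      ∀ u : ℝ → ℝ, ContDiffOn ℝ 2 u (Icc (0:ℝ) 1) → u 0 = 0 → u 1 = 0 →
        ν * ∫ x in (0:ℝ)..1, (iteratedDerivWithin 2 u (Icc (0:ℝ) 1) x)^2 ≤
          (∫ x in (0:ℝ)..1, (iteratedDerivWithin 2 u (Icc (0:ℝ) 1) x)^2)
          + β * (∫ x in (0:ℝ)..1, (iteratedDerivWithin 1 u (Icc (0:ℝ) 1) x)^2)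
          + k * (∫ x in (0:ℝ)..1, (u x)^2) := by
  have hπ : (0:ℝ) < π := Real.pi_pos
  by_cases hb : 0 ≤ β
  case pos =>
    refine ⟨1, one_pos, fun u hu h0 h1 => ?_⟩
    have hP : 0 ≤ ∫ x in (0:ℝ)..1, (iteratedDerivWithin 1 u (Icc (0:ℝ) 1) x)^2 := by
      apply intervalIntegral.integral_nonneg (by norm_num); intro x _; positivity
    have hR : 0 ≤ ∫ x in (0:ℝ)..1, (u x)^2 := by
      apply intervalIntegral.integral_nonneg (by norm_num); intro x _; positivity
    nlinarith [mul_nonneg hb hP, mul_nonneg hk.le hR]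
  case neg =>
    push_neg at hb
    obtain ⟨b, hbdef⟩ : ∃ b:ℝ, b = -β := ⟨-β, rfl⟩
    have hbpos : 0 < b := by rw [hbdef]; linarith
    have key : ∀ u : ℝ → ℝ, ContDiffOn ℝ 2 u (Icc (0:ℝ) 1) → u 0 = 0 → u 1 = 0 →
        (∫ x in (0:ℝ)..1, (iteratedDerivWithin 2 u (Icc (0:ℝ) 1) x)^2)
          = ∫ x in (0:ℝ)..1, (f2 u x)^2 := by
      intro u hu h0 h1
      apply intervalIntegral.integral_congr
      intro x hx
      rw [uIcc_of_le (by norm_num : (0:ℝ) ≤ 1)] at hx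
      dsimp only
      rw [f2_eq u x hx]
    have key1 : ∀ u : ℝ → ℝ,
        (∫ x in (0:ℝ)..1, (iteratedDerivWithin 1 u (Icc (0:ℝ) 1) x)^2)
          = ∫ x in (0:ℝ)..1, (f1 u x)^2 := by
      intro u
      apply intervalIntegral.integral_congr
      intro x hx
      rw [uIcc_of_le (by norm_num : (0:ℝ) ≤ 1)] at hx
      dsimp only
      rw [f1_eq u x hx]
    by_cases hcase : b^2 < 4*k
    case pos =>
      refine ⟨1 - b^2/(4*k), by
        have : b^2/(4*k) < 1 := (div_lt_one (by linarith)).mpr hcase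
        linarith, fun u hu h0 h1 => ?_⟩
      rw [key u hu h0 h1, key1 u]
      have hA := amgm u hu h0 h1 (b/(4*k)) (by positivity)
      generalize hQd : (∫ x in (0:ℝ)..1, (f2 u x)^2) = Q at hA ⊢
      generalize hPd : (∫ x in (0:ℝ)..1, (f1 u x)^2) = P at hA ⊢
      generalize hRd : (∫ x in (0:ℝ)..1, (u x)^2) = R at hA ⊢
      have hbP : b * P ≤ b^2/(4*k) * Q + k * R := by
        have e1 := mul_le_mul_of_nonneg_left hA hbpos.le
        have e2 : b * ((b/(4*k)) * Q + (1/(4*(b/(4*k)))) * R) = b^2/(4*k) * Q + k * R := by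
          field_simp
        linarith
      have e3 : (1 - b^2/(4*k)) * Q = Q - b^2/(4*k) * Q := by ring
      rw [e3, show β = -b by rw [hbdef]; ring]
      linarith
    case neg =>
      push_neg at hcase
      have hkπ : k ≤ π^4 := by
        by_contra hgt
        push_neg at hgt
        have hbb : betaBar k = 2 * Real.sqrt k := by
          rw [betaBar, if_neg (by linarith)]
        rw [hbb] at hβ
        have hb2 : b < 2 * Real.sqrt k := by
          rw [hbdef]; linarith
        nlinarith [Real.sq_sqrt hk.le, Real.sqrt_nonneg k]
      have hbb : betaBar k = π^2 + k/π^2 := by rw [betaBar, if_pos hkπ]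
      have hblt : b < π^2 + k/π^2 := by rw [hbdef]; rw [hbb] at hβ; linarith
      have hsqk : Real.sqrt k ≤ π^2 := by
        rw [show π^4 = (π^2)^2 by ring] at hkπ
        calc Real.sqrt k ≤ Real.sqrt ((π^2)^2) := Real.sqrt_le_sqrt hkπ
          _ = π^2 := Real.sqrt_sq (by positivity)
      have h2sk : 2 * Real.sqrt k ≤ b := by
        nlinarith [Real.sq_sqrt hk.le, Real.sqrt_nonneg k, hbpos]
      have hco : 0 ≤ b - 2*k/π^2 := by
        have : 2*k/π^2 ≤ 2*Real.sqrt k := by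
          rw [div_le_iff₀ (by positivity)]
          nlinarith [Real.sq_sqrt hk.le, Real.sqrt_nonneg k]
        linarith
      have hνpos : b*π^2 < π^4 + k := by
        have h7 := mul_lt_mul_of_pos_right hblt (by positivity : (0:ℝ) < π^2)
        have h9 : k/π^2 * π^2 = k := div_mul_cancel₀ k (by positivity)
        have h10 : (π^2 + k/π^2)*π^2 = π^4 + k/π^2*π^2 := by ring
        linarith
      refine ⟨(π^4 - b*π^2 + k)/π^4,
        div_pos (by linarith) (by positivity), fun u hu h0 h1 => ?_⟩
      rw [key u hu h0 h1, key1 u]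
      have hS1 := S1 u hu h0 h1
      have hPo := poincare u hu h0 h1
      have hA := amgm u hu h0 h1 (1/(2*π^2)) (by positivity)
      generalize hQd : (∫ x in (0:ℝ)..1, (f2 u x)^2) = Q at hS1 hA ⊢
      generalize hPd : (∫ x in (0:ℝ)..1, (f1 u x)^2) = P at hS1 hPo hA ⊢
      generalize hRd : (∫ x in (0:ℝ)..1, (u x)^2) = R at hS1 hPo hA ⊢
      have hS4 : P ≤ (1/π^2) * Q := by
        have h5 := mul_le_mul_of_nonneg_left hPo (by positivity : (0:ℝ) ≤ π^2)
        have h6 : π^2*P ≤ Q := by nlinarith [h5, hS1]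
        rw [show (1/π^2)*Q = Q/π^2 by ring, le_div_iff₀ (by positivity : (0:ℝ) < π^2)]
        nlinarith [h6]
      have hA' : P ≤ (1/(2*π^2)) * Q + (π^2/2) * R := by
        have e0 : (1/(4*(1/(2*π^2)))) = π^2/2 := by field_simp; ring
        rwa [e0] at hA
      have hbP : b*P ≤ (b/π^2 - k/π^4)*Q + k*R := by
        have e1 := mul_le_mul_of_nonneg_left hA' (by positivity : (0:ℝ) ≤ 2*k/π^2)
        have e2 := mul_le_mul_of_nonneg_left hS4 hco
        have e3 : b*P = (2*k/π^2)*P + (b - 2*k/π^2)*P := by ring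
        have e4 : (2*k/π^2)*((1/(2*π^2)) * Q + (π^2/2) * R)
            + (b - 2*k/π^2)*((1/π^2) * Q) = (b/π^2 - k/π^4)*Q + k*R := by
          field_simp
          ring
        linarith
      have e5 : (π^4 - b*π^2 + k)/π^4 * Q = Q - (b/π^2 - k/π^4)*Q := by
        field_simp
        ring
      rw [e5, show β = -b by rw [hbdef]; ring]
      linarith
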